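/- (Classical divergence theorem for densities.) Let M be a smooth manifold, μ a C¹ density on M, Υ a compactly supported C¹ vector field, D a domain with regular boundary in M, and n any field of conormals to ∂D. Then ∫_D £_Υ μ = ∫_{∂D} sgn_D(n) · n(Υ) · ι_n μ, where sgn_D(n)(x) = +1 if n(x) is outward pointing relative to D and −1 if inward pointing. If μ is nowhere vanishing the left-hand side equals ∫_D (div_μ Υ) μ. -/

import Mathlib

/-!
STATEMENT 19 (Classical divergence theorem for densities): Let `M` be a smooth
manifold, `μ` a `C¹` density, `Υ` a compactly supported `C¹` vector field, `D` a
domain with regular boundary and `n` any field of conormals to `∂D`.  Then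
`∫_D £_Υ μ = ∫_{∂D} sgn_D(n) · n(Υ) · ι_n μ`, and if `μ` is nowhere vanishing the
left-hand side equals `∫_D (div_μ Υ) μ`.

Formalized in the half-space chart (to which the statement reduces by the definition
of a domain with regular boundary): `M = E' × ℝ` with `E' = ℝ^d`,
`D = {x | x.2 ≤ 0}`, `∂D = E' × {0}`.  The density is `μ = ρ |dx|`, so
`£_Υ μ = div (ρ Υ) |dx| = trace (D(ρ Υ)) |dx|`; a density on tangent tuples is
`μ_p(v₁,…,v_{d+1}) = ρ(p)·|det(v₁,…,v_{d+1})|`, and for a transverse vector `Θ`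
with `n(Θ) = 1`, `(ι_n μ)(w₁,…,w_d) = μ(w₁,…,w_d,Θ)`; the boundary integral is
computed by evaluating `ι_n μ` on the standard basis of `E' = T(∂D)`.
-/

open MeasureTheory Set

variable {d : ℕ}

local notation "E'" => EuclideanSpace ℝ (Fin d)

/-- Coordinates on `E' × ℝ`. -/
noncomputable def prodCoord (v : EuclideanSpace ℝ (Fin d) × ℝ) : Fin (d + 1) → ℝ :=
  Fin.snoc (fun i => v.1 i) v.2

/-- The determinant of a `(d+1)`-tuple of vectors of `E' × ℝ`. -/
noncomputable def detTuple (v : Fin (d + 1) → EuclideanSpace ℝ (Fin d) × ℝ) : ℝ :=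
  (Matrix.of fun i j => prodCoord (v j) i).det


section Aux

open Topology

private lemma aux_integral_fderiv_apply_eq_zero {E : Type*} [NormedAddCommGroup E]
    [NormedSpace ℝ E] [MeasurableSpace E] [FiniteDimensional ℝ E] [BorelSpace E]
    (μ : Measure E) [μ.IsAddHaarMeasure] {f : E → ℝ}
    (hf : ContDiff ℝ 1 f) (hfc : HasCompactSupport f) (v : E) :
    ∫ x, fderiv ℝ f x v ∂μ = 0 := by
  have hfi : Integrable (fun x => fderiv ℝ f x v) μ := by
    refine Continuous.integrable_of_hasCompactSupport ?_ ?_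
    · exact (ContinuousLinearMap.apply ℝ ℝ v).continuous.comp (hf.continuous_fderiv one_ne_zero)
    · exact hfc.fderiv_apply (𝕜 := ℝ) v
  have h1 : Integrable (fun x => f x) μ :=
    hf.continuous.integrable_of_hasCompactSupport hfc
  have := integral_mul_fderiv_eq_neg_fderiv_mul_of_integrable (μ := μ)
    (f := fun _ : E => (1 : ℝ)) (g := f) (v := v)
    (by simpa [fderiv_const] using (integrable_zero E ℝ μ))
    (by simpa using hfi) (by simpa using h1) (fun x _ => differentiable_const (1:ℝ) x)
    (fun x _ => hf.differentiable one_ne_zero x)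
  simpa [fderiv_const] using this

private lemma aux_trace_formula
    (L : (EuclideanSpace ℝ (Fin d) × ℝ) →L[ℝ] (EuclideanSpace ℝ (Fin d) × ℝ)) :
    LinearMap.trace ℝ (EuclideanSpace ℝ (Fin d) × ℝ) L.toLinearMap =
      (∑ i : Fin d, (L (EuclideanSpace.single i 1, 0)).1 i) + (L (0,1)).2 := by
  classical
  set b : Module.Basis (Fin d ⊕ Unit) ℝ (EuclideanSpace ℝ (Fin d) × ℝ) :=
    ((EuclideanSpace.basisFun (Fin d) ℝ).toBasis).prod (Module.Basis.singleton Unit ℝ) with hb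
  rw [LinearMap.trace_eq_matrix_trace ℝ b, Matrix.trace]
  rw [Fintype.sum_sum_type]
  simp [Matrix.diag, LinearMap.toMatrix_apply, hb, Module.Basis.prod_apply,
    EuclideanSpace.basisFun_apply, Module.Basis.singleton_apply]

private lemma aux_detTuple_snoc (Θ : EuclideanSpace ℝ (Fin d) × ℝ) :
    detTuple (Fin.snoc (fun i : Fin d =>
      ((EuclideanSpace.single i (1:ℝ) : EuclideanSpace ℝ (Fin d)), (0:ℝ))) Θ) = Θ.2 := by
  classical
  set v : Fin (d+1) → EuclideanSpace ℝ (Fin d) × ℝ := Fin.snoc (fun i : Fin d =>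
      ((EuclideanSpace.single i (1:ℝ) : EuclideanSpace ℝ (Fin d)), (0:ℝ))) Θ with hv
  have htri : (Matrix.of fun i j => prodCoord (v j) i).BlockTriangular id := by
    intro i j hji
    simp only [Matrix.of_apply, id] at hji ⊢
    have hjlast : j ≠ Fin.last d := by
      intro h; subst h; exact absurd hji (by simpa using not_lt.2 (Fin.le_last i))
    obtain ⟨j', rfl⟩ := Fin.exists_castSucc_eq.2 hjlast
    rw [hv]
    simp only [Fin.snoc_castSucc, prodCoord]
    rcases eq_or_ne i (Fin.last d) with rfl | hi
    · simp
    · obtain ⟨i', rfl⟩ := Fin.exists_castSucc_eq.2 hi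
      simp only [Fin.snoc_castSucc, EuclideanSpace.single_apply]
      rw [if_neg]
      intro h
      rw [h] at hji
      exact lt_irrefl _ hji
  rw [detTuple, Matrix.det_of_upperTriangular htri]
  rw [Fin.prod_univ_castSucc]
  have h1 : ∀ i : Fin d, (Matrix.of fun i j => prodCoord (v j) i) i.castSucc i.castSucc = 1 := by
    intro i
    simp [hv, prodCoord, Fin.snoc_castSucc, EuclideanSpace.single_apply]
  have h2 : (Matrix.of fun i j => prodCoord (v j) i) (Fin.last d) (Fin.last d) = Θ.2 := by
    simp [hv, prodCoord]
  rw [h2, Finset.prod_congr rfl (fun i _ => h1 i)]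
  simp

private lemma aux_rhs_eq (n : EuclideanSpace ℝ (Fin d) × ℝ →L[ℝ] ℝ) (hn0 : n ≠ 0)
    (hntan : ∀ v : EuclideanSpace ℝ (Fin d), n (v, (0:ℝ)) = 0)
    (Θ : EuclideanSpace ℝ (Fin d) × ℝ) (hΘ : n Θ = 1)
    (u : EuclideanSpace ℝ (Fin d) × ℝ) (r : ℝ) :
    (if 0 < n ((0 : EuclideanSpace ℝ (Fin d)), (1:ℝ)) then (1:ℝ) else -1) * n u *
      (r * |detTuple (Fin.snoc (fun i : Fin d =>
        ((EuclideanSpace.single i (1:ℝ) : EuclideanSpace ℝ (Fin d)), (0:ℝ))) Θ)|)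
      = r * u.2 := by
  set c : ℝ := n ((0 : EuclideanSpace ℝ (Fin d)), (1:ℝ)) with hc
  have hlin : ∀ (v : EuclideanSpace ℝ (Fin d)) (t : ℝ), n (v, t) = t * c := by
    intro v t
    have : (v, t) = (v, (0:ℝ)) + t • ((0 : EuclideanSpace ℝ (Fin d)), (1:ℝ)) := by
      simp [Prod.ext_iff]
    rw [this, map_add, _root_.map_smul, hntan, hc]
    simp [smul_eq_mul]
  have hcne : c ≠ 0 := by
    intro h
    apply hn0
    refine ContinuousLinearMap.ext fun p => ?_
    rw [← Prod.mk.eta (p := p), hlin, h, mul_zero]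
    rfl
  have hΘ2 : Θ.2 = c⁻¹ := by
    have h1 : n Θ = Θ.2 * c := by rw [← Prod.mk.eta (p := Θ), hlin]
    rw [hΘ] at h1
    field_simp
    linarith [h1]
  have hu2 : n u = u.2 * c := by rw [← Prod.mk.eta (p := u), hlin]
  rw [aux_detTuple_snoc, hΘ2, hu2, abs_inv]
  rcases lt_or_gt_of_ne hcne with hneg | hpos
  · rw [if_neg (not_lt.2 hneg.le), abs_of_neg hneg]
    field_simp
  · rw [if_pos hpos, abs_of_pos hpos]
    field_simp

private lemma aux_embY_closed (t : ℝ) : Topology.IsClosedEmbedding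
    (fun y : EuclideanSpace ℝ (Fin d) => (y, t)) := by
  apply Isometry.isClosedEmbedding
  apply Isometry.of_dist_eq
  intro a b
  simp [Prod.dist_eq, dist_nonneg]

private lemma aux_embT_closed (y : EuclideanSpace ℝ (Fin d)) : Topology.IsClosedEmbedding
    (fun t : ℝ => (y, t)) := by
  apply Isometry.isClosedEmbedding
  apply Isometry.of_dist_eq
  intro a b
  simp [Prod.dist_eq, dist_nonneg]

private lemma aux_slice1 (F : EuclideanSpace ℝ (Fin d) × ℝ → EuclideanSpace ℝ (Fin d) × ℝ)
    (hF : ContDiff ℝ 1 F) (hFc : HasCompactSupport F) (i : Fin d) (t : ℝ) :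
    ∫ y : EuclideanSpace ℝ (Fin d),
      (fderiv ℝ F (y, t) ((EuclideanSpace.single i (1:ℝ)), (0:ℝ))).1 i = 0 := by
  set L : EuclideanSpace ℝ (Fin d) × ℝ →L[ℝ] ℝ :=
    (EuclideanSpace.proj i).comp (ContinuousLinearMap.fst ℝ _ _) with hL
  set J : EuclideanSpace ℝ (Fin d) →L[ℝ] EuclideanSpace ℝ (Fin d) × ℝ :=
    (ContinuousLinearMap.id ℝ _).prod 0 with hJ
  set φ : EuclideanSpace ℝ (Fin d) → ℝ := fun y => (F (y, t)).1 i with hφdef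
  have hemb : ContDiff ℝ 1 (fun y : EuclideanSpace ℝ (Fin d) => (y, t)) :=
    contDiff_id.prodMk contDiff_const
  have hφ : ContDiff ℝ 1 φ := L.contDiff.comp (hF.comp hemb)
  have hφc : HasCompactSupport φ := by
    have h1 : HasCompactSupport (fun y : EuclideanSpace ℝ (Fin d) => F (y, t)) :=
      hFc.comp_isClosedEmbedding (aux_embY_closed t)
    exact h1.comp_left (g := fun p : EuclideanSpace ℝ (Fin d) × ℝ => p.1 i) rfl
  have hder : ∀ y : EuclideanSpace ℝ (Fin d),
      fderiv ℝ φ y (EuclideanSpace.single i 1) =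
        (fderiv ℝ F (y, t) ((EuclideanSpace.single i (1:ℝ)), (0:ℝ))).1 i := by
    intro y
    have h1 : HasFDerivAt (fun y : EuclideanSpace ℝ (Fin d) => (y, t)) J y :=
      (hasFDerivAt_id y).prodMk (hasFDerivAt_const t y)
    have h2 : HasFDerivAt F (fderiv ℝ F (y, t)) (y, t) :=
      (hF.differentiable one_ne_zero (y, t)).hasFDerivAt
    have h3 : HasFDerivAt φ (L.comp ((fderiv ℝ F (y, t)).comp J)) y :=
      L.hasFDerivAt.comp y (h2.comp y h1)
    rw [h3.fderiv]
    simp [hL, hJ]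
  calc ∫ y : EuclideanSpace ℝ (Fin d),
        (fderiv ℝ F (y, t) ((EuclideanSpace.single i (1:ℝ)), (0:ℝ))).1 i
      = ∫ y : EuclideanSpace ℝ (Fin d), fderiv ℝ φ y (EuclideanSpace.single i 1) := by
        exact integral_congr_ae (Filter.Eventually.of_forall fun y => (hder y).symm)
    _ = 0 := aux_integral_fderiv_apply_eq_zero volume hφ hφc _

private lemma aux_slice2 (F : EuclideanSpace ℝ (Fin d) × ℝ → EuclideanSpace ℝ (Fin d) × ℝ)
    (hF : ContDiff ℝ 1 F) (hFc : HasCompactSupport F) (y : EuclideanSpace ℝ (Fin d)) :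
    ∫ t in Iic (0:ℝ), (fderiv ℝ F (y, t) ((0 : EuclideanSpace ℝ (Fin d)), (1:ℝ))).2
      = (F (y, 0)).2 := by
  set ψ : ℝ → ℝ := fun t => (F (y, t)).2 with hψdef
  have hembt : ContDiff ℝ 1 (fun t : ℝ => ((y, t) : EuclideanSpace ℝ (Fin d) × ℝ)) :=
    contDiff_const.prodMk contDiff_id
  have hψ : ContDiff ℝ 1 ψ := (hF.comp hembt).snd
  have hψc : HasCompactSupport ψ := by
    have h1 : HasCompactSupport (fun t : ℝ => F (y, t)) :=
      hFc.comp_isClosedEmbedding (aux_embT_closed y)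
    exact h1.comp_left (g := fun p : EuclideanSpace ℝ (Fin d) × ℝ => p.2) rfl
  have hder : ∀ t : ℝ, HasDerivAt ψ
      ((fderiv ℝ F (y, t) ((0 : EuclideanSpace ℝ (Fin d)), (1:ℝ))).2) t := by
    intro t
    have h1 : HasDerivAt (fun t : ℝ => (y, t)) ((0 : EuclideanSpace ℝ (Fin d)), (1:ℝ)) t :=
      (hasDerivAt_const t y).prodMk (hasDerivAt_id t)
    have h2 : HasFDerivAt F (fderiv ℝ F (y, t)) (y, t) :=
      (hF.differentiable one_ne_zero (y, t)).hasFDerivAt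
    have h3 := h2.comp_hasDerivAt t h1
    exact (ContinuousLinearMap.snd ℝ _ _).hasFDerivAt.comp_hasDerivAt t h3
  calc ∫ t in Iic (0:ℝ), (fderiv ℝ F (y, t) ((0 : EuclideanSpace ℝ (Fin d)), (1:ℝ))).2
      = ∫ t in Iic (0:ℝ), deriv ψ t := by
        exact integral_congr_ae (Filter.Eventually.of_forall fun t => ((hder t).deriv).symm)
    _ = ψ 0 := hψc.integral_Iic_deriv_eq hψ 0
    _ = (F (y, 0)).2 := rfl

private lemma aux_key (F : EuclideanSpace ℝ (Fin d) × ℝ → EuclideanSpace ℝ (Fin d) × ℝ)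
    (hF : ContDiff ℝ 1 F) (hFc : HasCompactSupport F) :
    ∫ x in {p : EuclideanSpace ℝ (Fin d) × ℝ | p.2 ≤ 0},
        LinearMap.trace ℝ (EuclideanSpace ℝ (Fin d) × ℝ) (fderiv ℝ F x).toLinearMap
      = ∫ y : EuclideanSpace ℝ (Fin d), (F (y, 0)).2 := by
  have hset : {p : EuclideanSpace ℝ (Fin d) × ℝ | p.2 ≤ 0} = univ ×ˢ Iic (0:ℝ) := by
    ext p; simp [Set.mem_prod]
  have hμD : (volume : Measure (EuclideanSpace ℝ (Fin d) × ℝ)).restrict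
      {p : EuclideanSpace ℝ (Fin d) × ℝ | p.2 ≤ 0}
      = (volume : Measure (EuclideanSpace ℝ (Fin d))).prod
          ((volume : Measure ℝ).restrict (Iic 0)) := by
    rw [Measure.volume_eq_prod, hset, ← Measure.prod_restrict, Measure.restrict_univ]
  set g : Fin d → EuclideanSpace ℝ (Fin d) × ℝ → ℝ :=
    fun i x => (fderiv ℝ F x ((EuclideanSpace.single i (1:ℝ)), (0:ℝ))).1 i with hg
  set h : EuclideanSpace ℝ (Fin d) × ℝ → ℝ :=
    fun x => (fderiv ℝ F x ((0 : EuclideanSpace ℝ (Fin d)), (1:ℝ))).2 with hh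
  have hcont : ∀ (u : EuclideanSpace ℝ (Fin d) × ℝ),
      Continuous (fun x => fderiv ℝ F x u) :=
    fun u => (ContinuousLinearMap.apply ℝ _ u).continuous.comp (hF.continuous_fderiv one_ne_zero)
  have hgint : ∀ i, Integrable (g i) (volume : Measure (EuclideanSpace ℝ (Fin d) × ℝ)) := by
    intro i
    refine Continuous.integrable_of_hasCompactSupport ?_ ?_
    · exact ((EuclideanSpace.proj i).comp
        (ContinuousLinearMap.fst ℝ _ _)).continuous.comp (hcont _)
    · exact (hFc.fderiv_apply (𝕜 := ℝ) _).comp_left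
        (g := fun p : EuclideanSpace ℝ (Fin d) × ℝ => p.1 i) rfl
  have hhint : Integrable h (volume : Measure (EuclideanSpace ℝ (Fin d) × ℝ)) := by
    refine Continuous.integrable_of_hasCompactSupport ?_ ?_
    · exact (ContinuousLinearMap.snd ℝ _ _).continuous.comp (hcont _)
    · exact (hFc.fderiv_apply (𝕜 := ℝ) _).comp_left
        (g := fun p : EuclideanSpace ℝ (Fin d) × ℝ => p.2) rfl
  have htr : (fun x => LinearMap.trace ℝ (EuclideanSpace ℝ (Fin d) × ℝ)
      (fderiv ℝ F x).toLinearMap) = fun x => (∑ i : Fin d, g i x) + h x :=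
    funext fun x => aux_trace_formula (fderiv ℝ F x)
  rw [htr]
  rw [integral_add (integrable_finset_sum _ (fun i _ => (hgint i).restrict)) hhint.restrict,
    integral_finset_sum _ (fun i _ => (hgint i).restrict)]
  have hzero : ∀ i : Fin d, ∫ x in {p : EuclideanSpace ℝ (Fin d) × ℝ | p.2 ≤ 0}, g i x = 0 := by
    intro i
    have hint : Integrable (g i) ((volume : Measure (EuclideanSpace ℝ (Fin d))).prod
        ((volume : Measure ℝ).restrict (Iic 0))) := by
      rw [← hμD]; exact (hgint i).restrict
    calc ∫ x in {p : EuclideanSpace ℝ (Fin d) × ℝ | p.2 ≤ 0}, g i x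
        = ∫ x, g i x ∂((volume : Measure (EuclideanSpace ℝ (Fin d))).prod
            ((volume : Measure ℝ).restrict (Iic 0))) := by rw [← hμD]
      _ = ∫ t, (∫ y, g i (y, t)) ∂((volume : Measure ℝ).restrict (Iic 0)) :=
          integral_prod_symm _ hint
      _ = 0 := by
          have : ∀ t : ℝ, (∫ y, g i (y, t)) = 0 := fun t => aux_slice1 F hF hFc i t
          simp [this]
  have hlast : ∫ x in {p : EuclideanSpace ℝ (Fin d) × ℝ | p.2 ≤ 0}, h x
      = ∫ y : EuclideanSpace ℝ (Fin d), (F (y, 0)).2 := by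
    have hint : Integrable h ((volume : Measure (EuclideanSpace ℝ (Fin d))).prod
        ((volume : Measure ℝ).restrict (Iic 0))) := by
      rw [← hμD]; exact hhint.restrict
    calc ∫ x in {p : EuclideanSpace ℝ (Fin d) × ℝ | p.2 ≤ 0}, h x
        = ∫ x, h x ∂((volume : Measure (EuclideanSpace ℝ (Fin d))).prod
            ((volume : Measure ℝ).restrict (Iic 0))) := by rw [← hμD]
      _ = ∫ y, (∫ t in Iic (0:ℝ), h (y, t)) := integral_prod _ hint
      _ = ∫ y : EuclideanSpace ℝ (Fin d), (F (y, 0)).2 :=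
          integral_congr_ae (Filter.Eventually.of_forall fun y => aux_slice2 F hF hFc y)
  rw [hlast]
  simp [hzero]

end Aux

set_option maxHeartbeats 1000000 in
/-- Divergence theorem for densities on the half-space domain `D = {x | x.2 ≤ 0}`. -/
theorem divergence_theorem_for_densities
    (ρ : EuclideanSpace ℝ (Fin d) × ℝ → ℝ) (hρ : ContDiff ℝ 1 ρ)
    (Υ : EuclideanSpace ℝ (Fin d) × ℝ → EuclideanSpace ℝ (Fin d) × ℝ)
    (hΥ : ContDiff ℝ 1 Υ) (hΥc : HasCompactSupport Υ)
    -- `n` is an arbitrary (not necessarily continuous) field of nonzero conormals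
    -- to `∂D = E' × {0}`
    (n : EuclideanSpace ℝ (Fin d) → (EuclideanSpace ℝ (Fin d) × ℝ →L[ℝ] ℝ))
    (hn0 : ∀ y, n y ≠ 0)
    (hntan : ∀ (y : EuclideanSpace ℝ (Fin d)) (v : EuclideanSpace ℝ (Fin d)),
      n y (v, (0 : ℝ)) = 0)
    -- a transverse field normalized by `n(Θ) = 1`, used to evaluate `ι_n μ`
    (Θ : EuclideanSpace ℝ (Fin d) → EuclideanSpace ℝ (Fin d) × ℝ)
    (hΘ : ∀ y, n y (Θ y) = 1) :
    -- `∫_D £_Υ μ = ∫_{∂D} sgn_D(n) · n(Υ) · ι_n μ`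
    (∫ x in {p : EuclideanSpace ℝ (Fin d) × ℝ | p.2 ≤ 0},
        LinearMap.trace ℝ (EuclideanSpace ℝ (Fin d) × ℝ)
          (fderiv ℝ (fun z => ρ z • Υ z) x).toLinearMap =
      ∫ y : EuclideanSpace ℝ (Fin d),
        (if 0 < n y ((0 : EuclideanSpace ℝ (Fin d)), (1 : ℝ)) then (1:ℝ) else -1) *
          n y (Υ (y, (0:ℝ))) *
          (ρ (y, (0:ℝ)) *
            |detTuple (Fin.snoc
              (fun i : Fin d => ((EuclideanSpace.single i (1:ℝ) :
                EuclideanSpace ℝ (Fin d)), (0:ℝ))) (Θ y))|)) ∧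
    -- and if `μ` is nowhere vanishing, `∫_D (div_μ Υ) μ` equals the same boundary
    -- integral
    ((∀ x, ρ x ≠ 0) →
      ∫ x in {p : EuclideanSpace ℝ (Fin d) × ℝ | p.2 ≤ 0},
        (LinearMap.trace ℝ (EuclideanSpace ℝ (Fin d) × ℝ)
          (fderiv ℝ (fun z => ρ z • Υ z) x).toLinearMap / ρ x) * ρ x =
      ∫ y : EuclideanSpace ℝ (Fin d),
        (if 0 < n y ((0 : EuclideanSpace ℝ (Fin d)), (1 : ℝ)) then (1:ℝ) else -1) *
          n y (Υ (y, (0:ℝ))) *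
          (ρ (y, (0:ℝ)) *
            |detTuple (Fin.snoc
              (fun i : Fin d => ((EuclideanSpace.single i (1:ℝ) :
                EuclideanSpace ℝ (Fin d)), (0:ℝ))) (Θ y))|)) := by
  have hF : ContDiff ℝ 1 (fun z => ρ z • Υ z) := hρ.smul hΥ
  have hFc : HasCompactSupport (fun z => ρ z • Υ z) := by
    apply hΥc.mono
    intro z hz
    simp only [Function.mem_support] at hz ⊢
    intro h
    exact hz (by rw [h, smul_zero])
  have main : (∫ x in {p : EuclideanSpace ℝ (Fin d) × ℝ | p.2 ≤ 0},
        LinearMap.trace ℝ (EuclideanSpace ℝ (Fin d) × ℝ)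
          (fderiv ℝ (fun z => ρ z • Υ z) x).toLinearMap) =
      ∫ y : EuclideanSpace ℝ (Fin d),
        (if 0 < n y ((0 : EuclideanSpace ℝ (Fin d)), (1 : ℝ)) then (1:ℝ) else -1) *
          n y (Υ (y, (0:ℝ))) *
          (ρ (y, (0:ℝ)) *
            |detTuple (Fin.snoc
              (fun i : Fin d => ((EuclideanSpace.single i (1:ℝ) :
                EuclideanSpace ℝ (Fin d)), (0:ℝ))) (Θ y))|) := by
    rw [aux_key _ hF hFc]
    refine integral_congr_ae (Filter.Eventually.of_forall fun y => ?_)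
    have h1 := aux_rhs_eq (n y) (hn0 y) (hntan y) (Θ y) (hΘ y) (Υ (y, (0:ℝ))) (ρ (y, (0:ℝ)))
    simp only [Prod.smul_snd, smul_eq_mul]
    exact h1.symm
  constructor
  · exact main
  · intro hρ0
    have heq : (fun x => LinearMap.trace ℝ (EuclideanSpace ℝ (Fin d) × ℝ)
          (fderiv ℝ (fun z => ρ z • Υ z) x).toLinearMap / ρ x * ρ x) =
        fun x => LinearMap.trace ℝ (EuclideanSpace ℝ (Fin d) × ℝ)
          (fderiv ℝ (fun z => ρ z • Υ z) x).toLinearMap :=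
      funext fun x => div_mul_cancel₀ _ (hρ0 x)
    rw [heq]
    exact main
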